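/- For the DM-MAC with degraded message sets, define 𝓛^max(ε;R₁*,R₂*) exactly as 𝓛(ε;R₁*,R₂*) but with the average error probability ε_n replaced by the maximal error probability ε_n^max = max_{m₁,m₂} Wⁿ({y : φ(y) ≠ (m₁,m₂)} | f₁(m₁,m₂), f₂(m₂)). Then for every ε ∈ (0,1) and every boundary point (R₁*,R₂*) of the capacity region 𝒞, 𝓛^max(ε;R₁*,R₂*) = 𝓛(ε;R₁*,R₂*). -/

import Mathlib

open MeasureTheory ProbabilityTheory Filter
open scoped Classical BigOperators

noncomputable section

/-- A function on a finite alphabet is a probability distribution. -/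
def IsDist {A : Type} [Fintype A] (P : A → ℝ) : Prop :=
  (∀ a, 0 ≤ P a) ∧ ∑ a, P a = 1

variable {X1 X2 Y : Type} [Fintype X1] [Fintype X2] [Fintype Y]

/-- The `n`-letter memoryless extension of the channel `W`. -/
def Wn (W : X1 → X2 → Y → ℝ) (n : ℕ) (x1 : Fin n → X1) (x2 : Fin n → X2)
    (y : Fin n → Y) : ℝ := ∏ i, W (x1 i) (x2 i) (y i)

/-- An `(n, M1, M2)` code for the MAC with degraded message sets. -/
structure MACCode (X1 X2 Y : Type) (n M1 M2 : ℕ) where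
  f1 : Fin M1 × Fin M2 → Fin n → X1
  f2 : Fin M2 → Fin n → X2
  dec : (Fin n → Y) → Fin M1 × Fin M2

/-- Error probability of the code for a fixed message pair `m`. -/
def errProb (W : X1 → X2 → Y → ℝ) {n M1 M2 : ℕ} (c : MACCode X1 X2 Y n M1 M2)
    (m : Fin M1 × Fin M2) : ℝ :=
  ∑ y : Fin n → Y, if c.dec y ≠ m then Wn W n (c.f1 m) (c.f2 m.2) y else 0

/-- Average error probability of a code. -/
def avgErr (W : X1 → X2 → Y → ℝ) {n M1 M2 : ℕ} (c : MACCode X1 X2 Y n M1 M2) : ℝ :=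
  (1 / ((M1 : ℝ) * (M2 : ℝ))) * ∑ m : Fin M1 × Fin M2, errProb W c m

/-- Output distribution `P_Y` induced by the input distribution `P` and the channel `W`. -/
def PYdist (W : X1 → X2 → Y → ℝ) (P : X1 × X2 → ℝ) (y : Y) : ℝ :=
  ∑ x : X1 × X2, P x * W x.1 x.2 y

/-- Conditional output distribution `P_{Y|X2}`. -/
def PYgX2 (W : X1 → X2 → Y → ℝ) (P : X1 × X2 → ℝ) (x2 : X2) (y : Y) : ℝ :=
  (∑ x1, P (x1, x2) * W x1 x2 y) / (∑ x1, P (x1, x2))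

/-- First information density `j₁(x₁,x₂,y) = log (W(y|x₁,x₂) / P_{Y|X₂}(y|x₂))`. -/
def j1 (W : X1 → X2 → Y → ℝ) (P : X1 × X2 → ℝ) (x1 : X1) (x2 : X2) (y : Y) : ℝ :=
  Real.log (W x1 x2 y / PYgX2 W P x2 y)

/-- Second information density `j₁₂(x₁,x₂,y) = log (W(y|x₁,x₂) / P_Y(y))`. -/
def j12 (W : X1 → X2 → Y → ℝ) (P : X1 × X2 → ℝ) (x1 : X1) (x2 : X2) (y : Y) : ℝ :=
  Real.log (W x1 x2 y / PYdist W P y)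

/-- The information density vector. -/
def jv (W : X1 → X2 → Y → ℝ) (P : X1 × X2 → ℝ) (x1 : X1) (x2 : X2) (y : Y) :
    Fin 2 → ℝ := ![j1 W P x1 x2 y, j12 W P x1 x2 y]

/-- Mutual information `I₁(P) = I(X₁;Y|X₂)`. -/
def I1 (W : X1 → X2 → Y → ℝ) (P : X1 × X2 → ℝ) : ℝ :=
  ∑ x : X1 × X2, ∑ y, P x * W x.1 x.2 y * j1 W P x.1 x.2 y

/-- Mutual information `I₁₂(P) = I(X₁,X₂;Y)`. -/
def I12 (W : X1 → X2 → Y → ℝ) (P : X1 × X2 → ℝ) : ℝ :=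
  ∑ x : X1 × X2, ∑ y, P x * W x.1 x.2 y * j12 W P x.1 x.2 y

/-- Conditional mean of the information density vector given `(x₁,x₂)`. -/
def condMean (W : X1 → X2 → Y → ℝ) (P : X1 × X2 → ℝ) (x1 : X1) (x2 : X2)
    (a : Fin 2) : ℝ := ∑ y, W x1 x2 y * jv W P x1 x2 y a

/-- Dispersion matrix `V(P) = E[Cov(j(X₁,X₂,Y) | X₁,X₂)]`. -/
def Vmat (W : X1 → X2 → Y → ℝ) (P : X1 × X2 → ℝ) : Matrix (Fin 2) (Fin 2) ℝ :=
  fun a b => ∑ x : X1 × X2, P x * ∑ y, W x.1 x.2 y *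
    ((jv W P x.1 x.2 y a - condMean W P x.1 x.2 a) *
     (jv W P x.1 x.2 y b - condMean W P x.1 x.2 b))

/-- The capacity region of the DM-MAC with degraded message sets. -/
def CapRegion (W : X1 → X2 → Y → ℝ) : Set (ℝ × ℝ) :=
  {R | 0 ≤ R.1 ∧ 0 ≤ R.2 ∧ ∃ P : X1 × X2 → ℝ, IsDist P ∧
    R.1 ≤ I1 W P ∧ R.1 + R.2 ≤ I12 W P}

end

noncomputable section

/-- The standard Gaussian measure on `ℝ²`. -/
def stdGaussian2 : Measure (Fin 2 → ℝ) :=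
  MeasureTheory.Measure.pi fun _ => gaussianReal 0 1

/-- The positive semidefinite square root (definition of the former `Matrix.PosSemidef.sqrt`). -/
def psdSqrt {V : Matrix (Fin 2) (Fin 2) ℝ} (hV : V.PosSemidef) : Matrix (Fin 2) (Fin 2) ℝ :=
  hV.1.eigenvectorUnitary.1 * Matrix.diagonal ((↑) ∘ (√·) ∘ hV.1.eigenvalues) *
    (star hV.1.eigenvectorUnitary : Matrix (Fin 2) (Fin 2) ℝ)

/-- `Ψ(z; V)`: probability that a centered Gaussian vector with covariance `V`
(the law of `V^{1/2} Z` for standard Gaussian `Z`) lies in `{u : u₁ ≤ z₁, u₂ ≤ z₂}`. -/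
def Psi (V : Matrix (Fin 2) (Fin 2) ℝ) (z : ℝ × ℝ) : ℝ :=
  if hV : V.PosSemidef then
    ((stdGaussian2.map (fun u => (psdSqrt hV).mulVec u)) {w | w 0 ≤ z.1 ∧ w 1 ≤ z.2}).toReal
  else 0

/-- `Ψ⁻¹(V, ε) = {z ∈ ℝ² : Ψ(-z₁, -z₂; V) ≥ 1 - ε}`. -/
def PsiInv (V : Matrix (Fin 2) (Fin 2) ℝ) (ε : ℝ) : Set (ℝ × ℝ) :=
  {z | 1 - ε ≤ Psi V (-z.1, -z.2)}

/-- The standard normal CDF `Φ`. -/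
def Phi (x : ℝ) : ℝ := ((gaussianReal 0 1) (Set.Iic x)).toReal

/-- The inverse `Φ⁻¹` of the standard normal CDF. -/
def PhiInv (ε : ℝ) : ℝ := sSup {x | Phi x ≤ ε}

end
noncomputable section
variable {X1 X2 Y : Type} [Fintype X1] [Fintype X2] [Fintype Y]

/-- `(L₁, L₂)` is `(ε, R₁*, R₂*)`-achievable: there is a sequence of codes with
`liminf (log M_{j,n} - n R_j*)/√n ≥ L_j` for `j = 1,2` and `limsup ε_n ≤ ε`. -/
def SOAchievable (W : X1 → X2 → Y → ℝ) (ε R1s R2s : ℝ) (L : ℝ × ℝ) : Prop :=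
  ∃ (M1 M2 : ℕ → ℕ) (c : ∀ n, MACCode X1 X2 Y n (M1 n) (M2 n)),
    ((L.1 : EReal) ≤ Filter.liminf
      (fun n : ℕ => (((Real.log (M1 n) - n * R1s) / Real.sqrt n : ℝ) : EReal))
      Filter.atTop) ∧
    ((L.2 : EReal) ≤ Filter.liminf
      (fun n : ℕ => (((Real.log (M2 n) - n * R2s) / Real.sqrt n : ℝ) : EReal))
      Filter.atTop) ∧
    Filter.limsup (fun n : ℕ => ((avgErr W (c n) : ℝ) : EReal)) Filter.atTop ≤ (ε : EReal)

/-- The `(ε, R₁*, R₂*)`-optimal second-order coding rate region: the closure of the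
set of `(ε, R₁*, R₂*)`-achievable pairs. -/
def SORegion (W : X1 → X2 → Y → ℝ) (ε R1s R2s : ℝ) : Set (ℝ × ℝ) :=
  closure {L : ℝ × ℝ | SOAchievable W ε R1s R2s L}

end
noncomputable section
variable {X1 X2 Y : Type} [Fintype X1] [Fintype X2] [Fintype Y]

/-- Maximal error probability of a code. -/
def maxErr (W : X1 → X2 → Y → ℝ) {n M1 M2 : ℕ} (c : MACCode X1 X2 Y n M1 M2) : ℝ :=
  ⨆ m : Fin M1 × Fin M2, errProb W c m

/-- `(L₁, L₂)` is `(ε, R₁*, R₂*)`-achievable under the maximal error criterion. -/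
def SOAchievableMax (W : X1 → X2 → Y → ℝ) (ε R1s R2s : ℝ) (L : ℝ × ℝ) : Prop :=
  ∃ (M1 M2 : ℕ → ℕ) (c : ∀ n, MACCode X1 X2 Y n (M1 n) (M2 n)),
    ((L.1 : EReal) ≤ Filter.liminf
      (fun n : ℕ => (((Real.log (M1 n) - n * R1s) / Real.sqrt n : ℝ) : EReal))
      Filter.atTop) ∧
    ((L.2 : EReal) ≤ Filter.liminf
      (fun n : ℕ => (((Real.log (M2 n) - n * R2s) / Real.sqrt n : ℝ) : EReal))
      Filter.atTop) ∧
    Filter.limsup (fun n : ℕ => ((maxErr W (c n) : ℝ) : EReal)) Filter.atTop ≤ (ε : EReal)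

/-- The second-order region under the maximal error probability criterion. -/
def SORegionMax (W : X1 → X2 → Y → ℝ) (ε R1s R2s : ℝ) : Set (ℝ × ℝ) :=
  closure {L : ℝ × ℝ | SOAchievableMax W ε R1s R2s L}

end
noncomputable section AuxProofLemmas

open Filter

variable {X1 X2 Y : Type} [Fintype X1] [Fintype X2] [Fintype Y]

lemma Wn_nonneg (W : X1 → X2 → Y → ℝ) (hW : ∀ x1 x2, IsDist (W x1 x2))
    (n : ℕ) (x1 : Fin n → X1) (x2 : Fin n → X2) (y : Fin n → Y) :
    0 ≤ Wn W n x1 x2 y :=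
  Finset.prod_nonneg fun _ _ => (hW _ _).1 _

lemma sum_Wn (W : X1 → X2 → Y → ℝ) (hW : ∀ x1 x2, IsDist (W x1 x2))
    (n : ℕ) (x1 : Fin n → X1) (x2 : Fin n → X2) :
    ∑ y : Fin n → Y, Wn W n x1 x2 y = 1 := by
  classical
  unfold Wn
  rw [← Fintype.piFinset_univ, ← Finset.prod_univ_sum]
  exact Finset.prod_eq_one fun i _ => (hW _ _).2

lemma errProb_nonneg (W : X1 → X2 → Y → ℝ) (hW : ∀ x1 x2, IsDist (W x1 x2))
    {n M1 M2 : ℕ} (c : MACCode X1 X2 Y n M1 M2) (m : Fin M1 × Fin M2) :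
    0 ≤ errProb W c m := by
  refine Finset.sum_nonneg fun y _ => ?_
  split
  · exact Wn_nonneg W hW n _ _ y
  · exact le_rfl

lemma errProb_le_one (W : X1 → X2 → Y → ℝ) (hW : ∀ x1 x2, IsDist (W x1 x2))
    {n M1 M2 : ℕ} (c : MACCode X1 X2 Y n M1 M2) (m : Fin M1 × Fin M2) :
    errProb W c m ≤ 1 := by
  calc errProb W c m ≤ ∑ y : Fin n → Y, Wn W n (c.f1 m) (c.f2 m.2) y := by
        refine Finset.sum_le_sum fun y _ => ?_
        split
        · exact le_rfl
        · exact Wn_nonneg W hW n _ _ y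
    _ = 1 := sum_Wn W hW n _ _

lemma avgErr_nonneg (W : X1 → X2 → Y → ℝ) (hW : ∀ x1 x2, IsDist (W x1 x2))
    {n M1 M2 : ℕ} (c : MACCode X1 X2 Y n M1 M2) : 0 ≤ avgErr W c :=
  mul_nonneg (by positivity) (Finset.sum_nonneg fun m _ => errProb_nonneg W hW c m)

lemma avgErr_le_one (W : X1 → X2 → Y → ℝ) (hW : ∀ x1 x2, IsDist (W x1 x2))
    {n M1 M2 : ℕ} (c : MACCode X1 X2 Y n M1 M2) : avgErr W c ≤ 1 := by
  unfold avgErr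
  rcases eq_or_ne ((M1 : ℝ) * (M2 : ℝ)) 0 with h | h
  · rw [h]
    simp
  · have hpos : (0 : ℝ) < (M1 : ℝ) * (M2 : ℝ) :=
      lt_of_le_of_ne (mul_nonneg (Nat.cast_nonneg M1) (Nat.cast_nonneg M2)) (Ne.symm h)
    have hsum : ∑ m : Fin M1 × Fin M2, errProb W c m ≤ (M1 : ℝ) * (M2 : ℝ) := by
      calc ∑ m : Fin M1 × Fin M2, errProb W c m ≤ ∑ _m : Fin M1 × Fin M2, (1 : ℝ) :=
            Finset.sum_le_sum fun m _ => errProb_le_one W hW c m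
        _ = (M1 : ℝ) * (M2 : ℝ) := by
            simp [Finset.sum_const, Finset.card_univ]
    rw [one_div, inv_mul_le_iff₀ hpos, mul_one]
    exact hsum

lemma avgErr_le_maxErr (W : X1 → X2 → Y → ℝ)
    {n M1 M2 : ℕ} (c : MACCode X1 X2 Y n M1 M2) : avgErr W c ≤ maxErr W c := by
  rcases isEmpty_or_nonempty (Fin M1 × Fin M2) with h | h
  · unfold avgErr maxErr
    rw [Finset.univ_eq_empty, Finset.sum_empty, mul_zero, Real.iSup_of_isEmpty]
  · have hM1 : 0 < M1 := Fin.pos (Classical.arbitrary (Fin M1 × Fin M2)).1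
    have hM2 : 0 < M2 := Fin.pos (Classical.arbitrary (Fin M1 × Fin M2)).2
    have hpos : (0 : ℝ) < (M1 : ℝ) * (M2 : ℝ) := by positivity
    unfold avgErr maxErr
    have hb : ∀ m : Fin M1 × Fin M2, errProb W c m ≤ ⨆ m, errProb W c m := fun m =>
      le_ciSup (Set.Finite.bddAbove (Set.finite_range _)) m
    have hsum : ∑ m : Fin M1 × Fin M2, errProb W c m ≤
        ((M1 * M2 : ℕ) : ℝ) * ⨆ m, errProb W c m := by
      calc ∑ m : Fin M1 × Fin M2, errProb W c m
          ≤ (Finset.univ : Finset (Fin M1 × Fin M2)).card • ⨆ m, errProb W c m :=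
            Finset.sum_le_card_nsmul _ _ _ fun m _ => hb m
        _ = ((M1 * M2 : ℕ) : ℝ) * ⨆ m, errProb W c m := by
            simp [Finset.card_univ, nsmul_eq_mul]
    rw [one_div, inv_mul_le_iff₀ hpos]
    calc ∑ m : Fin M1 × Fin M2, errProb W c m ≤ ((M1 * M2 : ℕ) : ℝ) * ⨆ m, errProb W c m := hsum
      _ = (M1 : ℝ) * (M2 : ℝ) * ⨆ m, errProb W c m := by push_cast; ring

lemma markov_card {α : Type} [Fintype α] (f : α → ℝ) (hf : ∀ a, 0 ≤ f a) (t : ℝ) :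
    (((Finset.univ.filter fun a => t ≤ f a).card : ℝ)) * t ≤ ∑ a, f a := by
  classical
  calc (((Finset.univ.filter fun a => t ≤ f a).card : ℝ)) * t
      = ∑ _a ∈ Finset.univ.filter fun a => t ≤ f a, t := by
        rw [Finset.sum_const, nsmul_eq_mul]
    _ ≤ ∑ a ∈ Finset.univ.filter fun a => t ≤ f a, f a :=
        Finset.sum_le_sum fun a ha => (Finset.mem_filter.1 ha).2
    _ ≤ ∑ a, f a :=
        Finset.sum_le_sum_of_subset_of_nonneg (Finset.filter_subset _ _) fun a _ _ => hf a

lemma good_card_bound {α : Type} [Fintype α] {f : α → ℝ} (hf : ∀ a, 0 ≤ f a)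
    {t S γ : ℝ} (ht : 0 < t) (hγ : 0 < γ)
    (hsum : ∑ a, f a = S) (hS : S * (1 + γ) ≤ (Fintype.card α : ℝ) * t) :
    (Fintype.card α : ℝ) * (γ / (1 + γ)) ≤ ((Finset.univ.filter fun a => f a < t).card : ℝ) := by
  classical
  have h1γ : (0 : ℝ) < 1 + γ := by linarith
  have hmar : (((Finset.univ.filter fun a => t ≤ f a).card : ℝ)) * t ≤ S := by
    rw [← hsum]; exact markov_card f hf t
  have hcards : (Finset.univ.filter fun a => f a < t).card +
      (Finset.univ.filter fun a => t ≤ f a).card = Fintype.card α := by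
    have := Finset.card_filter_add_card_filter_not
      (s := (Finset.univ : Finset α)) (p := fun a => f a < t)
    simpa [not_lt, Finset.card_univ] using this
  set B : ℝ := ((Finset.univ.filter fun a => t ≤ f a).card : ℝ) with hB
  set G : ℝ := ((Finset.univ.filter fun a => f a < t).card : ℝ) with hG
  have hGB : G + B = (Fintype.card α : ℝ) := by
    rw [hG, hB, ← Nat.cast_add, hcards]
  have hb : B * (1 + γ) ≤ (Fintype.card α : ℝ) := by
    nlinarith [mul_le_mul_of_nonneg_right hmar h1γ.le, ht]
  rw [← mul_div_assoc, div_le_iff₀ h1γ]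
  nlinarith [hb, hGB]

lemma limsup_aux {u w v : ℕ → ℝ} {ε : ℝ}
    (hu : Filter.limsup (fun n => ((u n : ℝ) : EReal)) Filter.atTop ≤ (ε : EReal))
    (hv : Filter.Tendsto v Filter.atTop (nhds 0))
    (hle : ∀ n, w n ≤ u n + v n) :
    Filter.limsup (fun n => ((w n : ℝ) : EReal)) Filter.atTop ≤ (ε : EReal) := by
  have hv' : Filter.Tendsto (fun n => ((v n : ℝ) : EReal)) Filter.atTop (nhds ((0 : ℝ) : EReal)) :=
    EReal.tendsto_coe.2 hv
  have hvl : Filter.limsup (fun n => ((v n : ℝ) : EReal)) Filter.atTop = ((0 : ℝ) : EReal) :=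
    hv'.limsup_eq
  have h1 : Filter.limsup (fun n => ((w n : ℝ) : EReal)) Filter.atTop ≤
      Filter.limsup ((fun n => ((u n : ℝ) : EReal)) + fun n => ((v n : ℝ) : EReal))
        Filter.atTop := by
    refine Filter.limsup_le_limsup (Filter.Eventually.of_forall fun n => ?_)
    exact by
      show ((w n : ℝ) : EReal) ≤ ((u n : ℝ) : EReal) + ((v n : ℝ) : EReal)
      rw [← EReal.coe_add]
      exact EReal.coe_le_coe_iff.2 (hle n)
  refine h1.trans ((EReal.limsup_add_le ?_ ?_).trans ?_)
  · right; rw [hvl]; exact EReal.coe_ne_top 0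
  · right; rw [hvl]; exact EReal.coe_ne_bot 0
  · rw [hvl, EReal.coe_zero, add_zero]; exact hu

lemma liminf_aux {u w v : ℕ → ℝ} {L : ℝ}
    (hu : (L : EReal) ≤ Filter.liminf (fun n => ((u n : ℝ) : EReal)) Filter.atTop)
    (hv : Filter.Tendsto v Filter.atTop (nhds 0))
    (hle : ∀ n, u n - v n ≤ w n) :
    (L : EReal) ≤ Filter.liminf (fun n => ((w n : ℝ) : EReal)) Filter.atTop := by
  have hv' : Filter.Tendsto (fun n => ((-v n : ℝ) : EReal)) Filter.atTop
      (nhds ((0 : ℝ) : EReal)) := EReal.tendsto_coe.2 (by simpa using hv.neg)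
  have hvl : Filter.liminf (fun n => ((-v n : ℝ) : EReal)) Filter.atTop = ((0 : ℝ) : EReal) :=
    hv'.liminf_eq
  have h2 : Filter.liminf ((fun n => ((u n : ℝ) : EReal)) + fun n => ((-v n : ℝ) : EReal))
      Filter.atTop ≤ Filter.liminf (fun n => ((w n : ℝ) : EReal)) Filter.atTop := by
    refine Filter.liminf_le_liminf (Filter.Eventually.of_forall fun n => ?_)
    exact by
      show ((u n : ℝ) : EReal) + ((-v n : ℝ) : EReal) ≤ ((w n : ℝ) : EReal)
      rw [← EReal.coe_add]
      exact EReal.coe_le_coe_iff.2 (by linarith [hle n])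
  refine le_trans ?_ ((EReal.le_liminf_add).trans h2)
  rw [hvl, EReal.coe_zero, add_zero]
  exact hu

end AuxProofLemmas

noncomputable section Expurgation

open Filter

set_option maxHeartbeats 1000000 in
lemma expurgation {X1 X2 Y : Type} [Fintype X1] [Fintype X2] [Fintype Y]
    (W : X1 → X2 → Y → ℝ) (hW : ∀ x1 x2, IsDist (W x1 x2))
    {n M1 M2 : ℕ} (hM1 : 0 < M1) (hM2 : 0 < M2) (c : MACCode X1 X2 Y n M1 M2) :
    ∃ c' : MACCode X1 X2 Y n (⌈(M1 : ℝ) / (n + 2)⌉₊) (⌈(M2 : ℝ) / (n + 2)⌉₊),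
      ∀ m, errProb W c' m ≤ avgErr W c + 9 / ((n : ℝ) + 1) := by
  classical
  set K1 := ⌈(M1 : ℝ) / (n + 2)⌉₊ with hK1def
  set K2 := ⌈(M2 : ℝ) / (n + 2)⌉₊ with hK2def
  have hN : (0 : ℝ) < (n : ℝ) + 1 := by positivity
  set γ : ℝ := 1 / ((n : ℝ) + 1) with hγdef
  have hγ0 : 0 < γ := by positivity
  have hγ1 : γ ≤ 1 := by rw [hγdef, div_le_one hN]; linarith
  have h1γ : (0 : ℝ) < 1 + γ := by linarith
  set ε := avgErr W c with hεdef
  have hε0 : 0 ≤ ε := avgErr_nonneg W hW c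
  have hε1 : ε ≤ 1 := avgErr_le_one W hW c
  have hM1R : (0 : ℝ) < M1 := by exact_mod_cast hM1
  have hM2R : (0 : ℝ) < M2 := by exact_mod_cast hM2
  have hfrac : γ / (1 + γ) = 1 / ((n : ℝ) + 2) := by
    rw [hγdef]
    field_simp
    ring
  -- total error sum
  have hsum : ∑ m : Fin M1 × Fin M2, errProb W c m = (M1 : ℝ) * M2 * ε := by
    rw [hεdef]
    unfold avgErr
    field_simp
  set e : Fin M2 → ℝ := fun b => ∑ a, errProb W c (a, b) with he
  have he0 : ∀ b, 0 ≤ e b := fun b => Finset.sum_nonneg fun a _ => errProb_nonneg W hW c _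
  have hesum : ∑ b, e b = (M1 : ℝ) * M2 * ε := by
    rw [← hsum, Fintype.sum_prod_type_right]
  -- level-2 expurgation
  set good2 := Finset.univ.filter (fun b : Fin M2 => e b < (M1 : ℝ) * ((ε + γ) * (1 + γ)))
    with hg2
  have hgood2 : (M2 : ℝ) * (γ / (1 + γ)) ≤ (good2.card : ℝ) := by
    have := good_card_bound he0 (t := (M1 : ℝ) * ((ε + γ) * (1 + γ)))
      (S := (M1 : ℝ) * M2 * ε) (γ := γ) (by positivity) hγ0 hesum
      (by
        rw [Fintype.card_fin]
        nlinarith [mul_pos (mul_pos hM1R hM2R) hγ0,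
          mul_pos (mul_pos (mul_pos hM1R hM2R) hγ0) hγ0, hε0,
          mul_nonneg (mul_nonneg hM1R.le hM2R.le) hε0])
    simpa [Fintype.card_fin] using this
  have hK2card : K2 ≤ good2.card := by
    rw [hK2def]
    refine Nat.ceil_le.2 ?_
    calc (M2 : ℝ) / ((n : ℝ) + 2) = (M2 : ℝ) * (γ / (1 + γ)) := by rw [hfrac]; ring
      _ ≤ (good2.card : ℝ) := hgood2
  have hK2cast : ((n : ℕ) : ℝ) + 2 = ((n + 2 : ℕ) : ℝ) := by push_cast; ring
  -- level-1 expurgation, for every b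
  set good1 : Fin M2 → Finset (Fin M1) := fun b =>
    Finset.univ.filter (fun a : Fin M1 =>
      (M1 : ℝ) * errProb W c (a, b) < (e b + (M1 : ℝ) * γ) * (1 + γ)) with hg1
  have hgood1 : ∀ b, K1 ≤ (good1 b).card := by
    intro b
    have hsum1 : ∑ a, (M1 : ℝ) * errProb W c (a, b) = (M1 : ℝ) * e b := by
      rw [he, Finset.mul_sum]
    have ht1 : (0 : ℝ) < (e b + (M1 : ℝ) * γ) * (1 + γ) := by
      have := he0 b
      nlinarith [mul_pos hM1R hγ0]
    have hb := good_card_bound (f := fun a => (M1 : ℝ) * errProb W c (a, b))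
      (fun a => mul_nonneg hM1R.le (errProb_nonneg W hW c _)) ht1 hγ0 hsum1
      (by
        rw [Fintype.card_fin]
        nlinarith [mul_pos (mul_pos hM1R hM1R) hγ0,
          mul_pos (mul_pos (mul_pos hM1R hM1R) hγ0) hγ0, he0 b,
          mul_nonneg (he0 b) hγ0.le])
    rw [hK1def]
    refine Nat.ceil_le.2 ?_
    calc (M1 : ℝ) / ((n : ℝ) + 2) = (M1 : ℝ) * (γ / (1 + γ)) := by rw [hfrac]; ring
      _ ≤ ((good1 b).card : ℝ) := by simpa [Fintype.card_fin, hg1] using hb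
  -- choose the subcodebooks
  obtain ⟨S2, hS2sub, hS2card⟩ := Finset.exists_subset_card_eq hK2card
  have hT : ∀ b : Fin M2, ∃ t ⊆ good1 b, t.card = K1 := fun b =>
    Finset.exists_subset_card_eq (hgood1 b)
  choose T hTsub hTcard using hT
  set σ : Fin K2 ↪o Fin M2 := S2.orderEmbOfFin hS2card with hσdef
  have hσmem : ∀ i, σ i ∈ good2 := fun i => hS2sub (Finset.orderEmbOfFin_mem S2 hS2card i)
  set τ : Fin M2 → (Fin K1 ↪o Fin M1) := fun b => (T b).orderEmbOfFin (hTcard b) with hτdef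
  have hτmem : ∀ b i, τ b i ∈ good1 b := fun b i =>
    hTsub b (Finset.orderEmbOfFin_mem (T b) (hTcard b) i)
  have hK1pos : 0 < K1 := by
    rw [hK1def]
    exact Nat.ceil_pos.2 (by positivity)
  have hK2pos : 0 < K2 := by
    rw [hK2def]
    exact Nat.ceil_pos.2 (by positivity)
  set m0 : Fin K1 × Fin K2 := (⟨0, hK1pos⟩, ⟨0, hK2pos⟩) with hm0
  refine ⟨{ f1 := fun p => c.f1 (τ (σ p.2) p.1, σ p.2),
            f2 := fun b => c.f2 (σ b),
            dec := fun y =>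
              if h : ∃ p : Fin K1 × Fin K2, c.dec y = (τ (σ p.2) p.1, σ p.2)
              then h.choose else m0 }, ?_⟩
  rintro ⟨a, b⟩
  have hcomp : errProb W
      { f1 := fun p : Fin K1 × Fin K2 => c.f1 (τ (σ p.2) p.1, σ p.2),
        f2 := fun b : Fin K2 => c.f2 (σ b),
        dec := fun y =>
          if h : ∃ p : Fin K1 × Fin K2, c.dec y = (τ (σ p.2) p.1, σ p.2)
          then h.choose else m0 } (a, b) ≤ errProb W c (τ (σ b) a, σ b) := by
    unfold errProb
    refine Finset.sum_le_sum fun y _ => ?_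
    dsimp only
    by_cases hy : c.dec y = (τ (σ b) a, σ b)
    · have hex : ∃ p : Fin K1 × Fin K2, c.dec y = (τ (σ p.2) p.1, σ p.2) := ⟨(a, b), hy⟩
      have hch := hex.choose_spec
      have heq : (τ (σ hex.choose.2) hex.choose.1, σ hex.choose.2)
          = (τ (σ b) a, σ b) := hch.symm.trans hy
      have h2 : hex.choose.2 = b := σ.injective (congrArg Prod.snd heq)
      have h1 : hex.choose.1 = a := by
        have := congrArg Prod.fst heq
        rw [h2] at this
        exact (τ (σ b)).injective this
      have hdec : (if h : ∃ p : Fin K1 × Fin K2, c.dec y = (τ (σ p.2) p.1, σ p.2)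
          then h.choose else m0) = (a, b) := by
        rw [dif_pos hex]
        exact Prod.ext h1 h2
      rw [if_neg (not_not_intro hdec)]
      split
      · exact Wn_nonneg W hW n _ _ y
      · exact le_rfl
    · rw [if_pos hy]
      have hite : ∀ (p : Prop) (_ : Decidable p) (w : ℝ), 0 ≤ w → (if p then w else 0) ≤ w := by
        intro p hp w hw
        split
        · exact le_rfl
        · exact hw
      exact hite _ _ _ (Wn_nonneg W hW n _ _ y)
  have hb2 : e (σ b) < (M1 : ℝ) * ((ε + γ) * (1 + γ)) := by
    have := hσmem b
    rw [hg2, Finset.mem_filter] at this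
    exact this.2
  have hb1 : (M1 : ℝ) * errProb W c (τ (σ b) a, σ b)
      < (e (σ b) + (M1 : ℝ) * γ) * (1 + γ) := by
    have := hτmem (σ b) a
    rw [hg1, Finset.mem_filter] at this
    exact this.2
  have hq : errProb W c (τ (σ b) a, σ b) ≤ (ε + γ) * (1 + γ) ^ 2 + γ * (1 + γ) := by
    nlinarith [mul_lt_mul_of_pos_right hb2 h1γ, hb1, hM1R]
  have hrw : 9 / ((n : ℝ) + 1) = 9 * γ := by rw [hγdef]; ring
  rw [hrw]
  nlinarith [hcomp, hq, hε0, hε1, hγ0.le, hγ1, sq_nonneg γ,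
    mul_nonneg hγ0.le hγ0.le, mul_nonneg (mul_nonneg hγ0.le hγ0.le) hγ0.le,
    mul_nonneg hε0 hγ0.le, mul_nonneg (mul_nonneg hε0 hγ0.le) hγ0.le]

end Expurgation
noncomputable section FinalGlue

open Filter

lemma tendsto_nine : Tendsto (fun n : ℕ => 9 / ((n : ℝ) + 1)) atTop (nhds 0) :=
  Tendsto.div_atTop tendsto_const_nhds
    (tendsto_atTop_add_const_right atTop 1 tendsto_natCast_atTop_atTop)

lemma tendsto_logdiv :
    Tendsto (fun n : ℕ => Real.log ((n : ℝ) + 2) / Real.sqrt n) atTop (nhds 0) := by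
  have hg : Tendsto (fun x : ℝ => Real.log x / x ^ (1/2 : ℝ)) atTop (nhds 0) :=
    (isLittleO_log_rpow_atTop (by norm_num)).tendsto_div_nhds_zero
  have hcomp : Tendsto (fun n : ℕ => Real.log ((n : ℝ) + 2) / ((n : ℝ) + 2) ^ (1/2 : ℝ))
      atTop (nhds 0) :=
    hg.comp (tendsto_atTop_add_const_right atTop 2 tendsto_natCast_atTop_atTop)
  have hcomp2 : Tendsto (fun n : ℕ => 2 * (Real.log ((n : ℝ) + 2) / ((n : ℝ) + 2) ^ (1/2 : ℝ)))
      atTop (nhds 0) := by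
    simpa using hcomp.const_mul 2
  refine squeeze_zero' ?_ ?_ hcomp2
  · filter_upwards with n
    have h1 : (1 : ℝ) ≤ (n : ℝ) + 2 := by
      have := Nat.cast_nonneg (α := ℝ) n
      linarith
    exact div_nonneg (Real.log_nonneg h1) (Real.sqrt_nonneg _)
  · filter_upwards [eventually_ge_atTop 1] with n hn
    have hn1 : (1 : ℝ) ≤ (n : ℝ) := by exact_mod_cast hn
    have hlog : 0 ≤ Real.log ((n : ℝ) + 2) := Real.log_nonneg (by linarith)
    have hs : Real.sqrt ((n : ℝ) + 2) ≤ 2 * Real.sqrt n := by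
      rw [show (2 : ℝ) * Real.sqrt n = Real.sqrt 4 * Real.sqrt n by
            rw [show (4 : ℝ) = 2 ^ 2 by norm_num, Real.sqrt_sq (by norm_num : (0:ℝ) ≤ 2)],
        ← Real.sqrt_mul (by norm_num : (0:ℝ) ≤ 4)]
      exact Real.sqrt_le_sqrt (by linarith)
    have hspos : 0 < Real.sqrt (n : ℝ) := Real.sqrt_pos.2 (by linarith)
    have hs2pos : 0 < Real.sqrt ((n : ℝ) + 2) := Real.sqrt_pos.2 (by linarith)
    rw [← Real.sqrt_eq_rpow,
      show 2 * (Real.log ((n : ℝ) + 2) / Real.sqrt ((n : ℝ) + 2))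
        = (2 * Real.log ((n : ℝ) + 2)) / Real.sqrt ((n : ℝ) + 2) by ring,
      div_le_div_iff₀ hspos hs2pos]
    nlinarith [mul_le_mul_of_nonneg_left hs hlog]

lemma rate_ineq {M : ℕ} (hM : 0 < M) (n : ℕ) (R : ℝ) :
    (Real.log M - n * R) / Real.sqrt n - Real.log ((n : ℝ) + 2) / Real.sqrt n ≤
      (Real.log (⌈(M : ℝ) / ((n : ℝ) + 2)⌉₊ : ℕ) - n * R) / Real.sqrt n := by
  rw [div_sub_div_same]
  have h2 : (0 : ℝ) < (n : ℝ) + 2 := by positivity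
  have hMp : (0 : ℝ) < M := by exact_mod_cast hM
  have hd : (0 : ℝ) < (M : ℝ) / ((n : ℝ) + 2) := by positivity
  have hnum : Real.log M - n * R - Real.log ((n : ℝ) + 2) ≤
      Real.log (⌈(M : ℝ) / ((n : ℝ) + 2)⌉₊ : ℕ) - n * R := by
    have hceil : (M : ℝ) / ((n : ℝ) + 2) ≤ ((⌈(M : ℝ) / ((n : ℝ) + 2)⌉₊ : ℕ) : ℝ) :=
      Nat.le_ceil _
    have hlog := Real.log_le_log hd hceil
    rw [Real.log_div (ne_of_gt hMp) (ne_of_gt h2)] at hlog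
    linarith
  rcases eq_or_lt_of_le (Real.sqrt_nonneg (n : ℝ)) with hs | hs
  · rw [← hs]
    simp
  · exact (div_le_div_iff_of_pos_right hs).2 hnum

end FinalGlue
/-- **Reduction from average to maximal error**: for the DM-MAC with degraded message
sets, the second-order regions under the maximal and average error criteria coincide at
every boundary point of the capacity region, for every `ε ∈ (0,1)`. -/
theorem SORegion_max_eq_avg {X1 X2 Y : Type} [Fintype X1] [Fintype X2] [Fintype Y]
    (W : X1 → X2 → Y → ℝ) (hW : ∀ x1 x2, IsDist (W x1 x2))
    (ε : ℝ) (hε : ε ∈ Set.Ioo (0 : ℝ) 1) (R1s R2s : ℝ)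
    (hbd : (R1s, R2s) ∈ CapRegion W ∧ (R1s, R2s) ∉ interior (CapRegion W)) :
    SORegionMax W ε R1s R2s = SORegion W ε R1s R2s := by
  classical
  obtain ⟨-, -, P, hP, -, -⟩ := hbd.1
  have hXne : Nonempty (X1 × X2) := by
    by_contra h
    rw [not_nonempty_iff] at h
    have h1 := hP.2
    rw [Finset.univ_eq_empty, Finset.sum_empty] at h1
    exact zero_ne_one h1
  obtain ⟨x0⟩ := hXne
  haveI hX1 : Nonempty X1 := ⟨x0.1⟩
  haveI hX2 : Nonempty X2 := ⟨x0.2⟩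
  haveI hY : Nonempty Y := by
    by_contra h
    rw [not_nonempty_iff] at h
    have h1 := (hW x0.1 x0.2).2
    rw [Finset.univ_eq_empty, Finset.sum_empty] at h1
    exact zero_ne_one h1
  have hset : {L : ℝ × ℝ | SOAchievableMax W ε R1s R2s L}
      = {L : ℝ × ℝ | SOAchievable W ε R1s R2s L} := by
    ext L
    show SOAchievableMax W ε R1s R2s L ↔ SOAchievable W ε R1s R2s L
    constructor
    · rintro ⟨M1, M2, c, h1, h2, h3⟩
      refine ⟨M1, M2, c, h1, h2,
        le_trans (Filter.limsup_le_limsup (Filter.Eventually.of_forall fun n => ?_)) h3⟩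
      exact EReal.coe_le_coe_iff.2 (avgErr_le_maxErr W (c n))
    · rintro ⟨M1, M2, c, h1, h2, h3⟩
      have hMpos : ∀ n : ℕ, 0 < M1 n ∧ 0 < M2 n := by
        intro n
        have m := (c n).dec (fun _ => Classical.arbitrary Y)
        exact ⟨m.1.pos, m.2.pos⟩
      choose c' hc' using fun n => expurgation W hW (hMpos n).1 (hMpos n).2 (c n)
      refine ⟨fun n => ⌈(M1 n : ℝ) / ((n : ℝ) + 2)⌉₊, fun n => ⌈(M2 n : ℝ) / ((n : ℝ) + 2)⌉₊,
        c', ?_, ?_, ?_⟩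
      · exact liminf_aux h1 tendsto_logdiv fun n => rate_ineq (hMpos n).1 n R1s
      · exact liminf_aux h2 tendsto_logdiv fun n => rate_ineq (hMpos n).2 n R2s
      · refine limsup_aux h3 tendsto_nine fun n => ?_
        have hpos1 : (0 : ℝ) < (M1 n : ℝ) / ((n : ℝ) + 2) := by
          have := (hMpos n).1
          have h0 : (0 : ℝ) < (M1 n : ℝ) := by exact_mod_cast this
          positivity
        have hpos2 : (0 : ℝ) < (M2 n : ℝ) / ((n : ℝ) + 2) := by
          have := (hMpos n).2
          have h0 : (0 : ℝ) < (M2 n : ℝ) := by exact_mod_cast this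
          positivity
        haveI : Nonempty (Fin ⌈(M1 n : ℝ) / ((n : ℝ) + 2)⌉₊ × Fin ⌈(M2 n : ℝ) / ((n : ℝ) + 2)⌉₊) :=
          ⟨(⟨0, Nat.ceil_pos.2 hpos1⟩, ⟨0, Nat.ceil_pos.2 hpos2⟩)⟩
        unfold maxErr
        exact ciSup_le (hc' n)

  show closure _ = closure _
  rw [hset]
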